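/- arXiv:1601.02633 — 2 statements merged into one kernel-verified Lean document; each statement's English description precedes it below -/
import Mathlib

section
/- Let Λ be the Weyl orbit of a minuscule weight of an irreducible simply-laced root system with simple roots α_1, ..., α_r. Then the matrix C̃ with entries C̃_{ij} = Σ_{ν ∈ Λ} ⟨α_i, ν⟩⟨ν, α_j⟩ is a positive integer multiple of the Cartan matrix: C̃_{ij} = k·⟨α_i, α_j⟩, where k = |{ν ∈ Λ | ⟨ν, α_i⟩ = 1}| (independent of i). -/
open scoped RealInnerProductSpace

theorem stmt9 {E : Type*} [NormedAddCommGroup E] [InnerProductSpace ℝ E]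
    {r : ℕ} (Φ : Set E) (αs : Fin r → E) (hαs : ∀ i, αs i ∈ Φ)
    (hlen : ∀ α ∈ Φ, ⟪α, α⟫ = 2)
    (Λ : Finset E) (R : ℝ) (hsph : ∀ μ ∈ Λ, ‖μ‖ = R)
    (hmin : ∀ μ ∈ Λ, ∀ α ∈ Φ, ⟪μ, α⟫ = -1 ∨ ⟪μ, α⟫ = 0 ∨ ⟪μ, α⟫ = 1)
    (hinv : ∀ α ∈ Φ, ∀ μ ∈ Λ, μ - ⟪μ, α⟫ • α ∈ Λ)
    (W : Set (E ≃ₗᵢ[ℝ] E))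
    (hWΛ : ∀ w ∈ W, ∀ μ ∈ Λ, w μ ∈ Λ)
    (htrans : ∀ α ∈ Φ, ∀ β ∈ Φ, ∃ w ∈ W, w α = β)
    (hnondeg : ∀ α ∈ Φ, ∃ μ ∈ Λ, ⟪μ, α⟫ ≠ 0) :
    ∃ k : ℕ, 0 < k ∧
      (∀ i : Fin r, k = Set.ncard {ν : E | ν ∈ Λ ∧ ⟪ν, αs i⟫ = 1}) ∧
      ∀ i j : Fin r,
        ∑ ν ∈ Λ, ⟪αs i, ν⟫ * ⟪ν, αs j⟫ = (k : ℝ) * ⟪αs i, αs j⟫ := by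
  classical
  -- membership lemmas for the ±1 level sets
  have hNP : ∀ α ∈ Φ, ∀ ν ∈ Λ.filter (fun ν => ⟪ν, α⟫ = -1),
      ν + α ∈ Λ.filter (fun ν => ⟪ν, α⟫ = 1) := by
    intro α hα ν hν
    simp only [Finset.mem_filter] at hν ⊢
    obtain ⟨hνΛ, hν1⟩ := hν
    refine ⟨?_, ?_⟩
    · have h := hinv α hα ν hνΛ
      rw [hν1] at h
      simpa [neg_smul, one_smul, sub_neg_eq_add] using h
    · rw [inner_add_left, hν1, hlen α hα]; ring
  have hPN : ∀ α ∈ Φ, ∀ ν ∈ Λ.filter (fun ν => ⟪ν, α⟫ = 1),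
      ν - α ∈ Λ.filter (fun ν => ⟪ν, α⟫ = -1) := by
    intro α hα ν hν
    simp only [Finset.mem_filter] at hν ⊢
    obtain ⟨hνΛ, hν1⟩ := hν
    refine ⟨?_, ?_⟩
    · have h := hinv α hα ν hνΛ
      rw [hν1] at h
      simpa [one_smul] using h
    · rw [inner_sub_left, hν1, hlen α hα]; ring
  -- sum over the -1 level set, via the bijection ν ↦ ν + α
  have hsumN : ∀ α ∈ Φ, ∀ β : E, ∀ f : E → ℝ,
      ∑ ν ∈ Λ.filter (fun ν => ⟪ν, α⟫ = -1), f ν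
        = ∑ ν ∈ Λ.filter (fun ν => ⟪ν, α⟫ = 1), f (ν - α) := by
    intro α hα β f
    refine Finset.sum_bij' (fun ν _ => ν + α) (fun ν _ => ν - α)
      (fun ν hν => hNP α hα ν hν) (fun ν hν => hPN α hα ν hν)
      (fun ν hν => by module) (fun ν hν => by module) (fun ν hν => by simp)
  -- the key sum identity
  have hsum : ∀ α ∈ Φ, ∀ β : E,
      ∑ ν ∈ Λ, ⟪α, ν⟫ * ⟪ν, β⟫
        = ((Λ.filter (fun ν => ⟪ν, α⟫ = 1)).card : ℝ) * ⟪α, β⟫ := by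
    intro α hα β
    have hpt : ∀ ν ∈ Λ, ⟪α, ν⟫ * ⟪ν, β⟫ =
        (if ⟪ν, α⟫ = 1 then ⟪ν, β⟫ else 0)
          + (if ⟪ν, α⟫ = -1 then -⟪ν, β⟫ else 0) := by
      intro ν hν
      rw [real_inner_comm ν α]
      rcases hmin ν hν α hα with h | h | h <;> rw [h] <;> norm_num
    rw [Finset.sum_congr rfl hpt, Finset.sum_add_distrib,
      ← Finset.sum_filter, ← Finset.sum_filter, Finset.sum_neg_distrib,
      hsumN α hα β (fun ν => ⟪ν, β⟫)]
    simp only [inner_sub_left, Finset.sum_sub_distrib, Finset.sum_const, nsmul_eq_mul]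
    ring
  -- the cardinality is independent of the root
  have hle : ∀ α ∈ Φ, ∀ β ∈ Φ,
      (Λ.filter (fun ν => ⟪ν, α⟫ = 1)).card ≤ (Λ.filter (fun ν => ⟪ν, β⟫ = 1)).card := by
    intro α hα β hβ
    obtain ⟨w, hw, hwαβ⟩ := htrans α hα β hβ
    refine Finset.card_le_card_of_injOn (fun ν => w ν) ?_ ?_
    · intro ν hν
      simp only [Finset.coe_filter, Finset.mem_coe, Finset.mem_filter, Set.mem_setOf_eq] at hν ⊢
      exact ⟨hWΛ w hw ν hν.1, by rw [← hwαβ, LinearIsometryEquiv.inner_map_map]; exact hν.2⟩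
    · intro x _ y _ hxy
      exact w.injective hxy
  have hcardeq : ∀ α ∈ Φ, ∀ β ∈ Φ,
      (Λ.filter (fun ν => ⟪ν, α⟫ = 1)).card = (Λ.filter (fun ν => ⟪ν, β⟫ = 1)).card :=
    fun α hα β hβ => le_antisymm (hle α hα β hβ) (hle β hβ α hα)
  -- positivity
  have hpos : ∀ α ∈ Φ, 0 < (Λ.filter (fun ν => ⟪ν, α⟫ = 1)).card := by
    intro α hα
    obtain ⟨μ, hμ, hne⟩ := hnondeg α hα
    rcases hmin μ hμ α hα with h | h | h
    · exact Finset.card_pos.mpr ⟨μ + α, hNP α hα μ (Finset.mem_filter.mpr ⟨hμ, h⟩)⟩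
    · exact absurd h hne
    · exact Finset.card_pos.mpr ⟨μ, Finset.mem_filter.mpr ⟨hμ, h⟩⟩
  -- assemble
  rcases Nat.eq_zero_or_pos r with hr | hr
  · refine ⟨1, one_pos, ?_, ?_⟩ <;> intro i <;> exact absurd i.2 (by omega)
  · set i0 : Fin r := ⟨0, hr⟩
    refine ⟨(Λ.filter (fun ν => ⟪ν, αs i0⟫ = 1)).card, hpos _ (hαs i0), ?_, ?_⟩
    · intro i
      rw [hcardeq _ (hαs i0) _ (hαs i)]
      have : {ν : E | ν ∈ Λ ∧ ⟪ν, αs i⟫ = 1}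
          = ↑(Λ.filter (fun ν => ⟪ν, αs i⟫ = 1)) := by
        ext ν; simp [Finset.mem_filter]
      rw [this, Set.ncard_coe_finset]
    · intro i j
      rw [hsum _ (hαs i) (αs j), hcardeq _ (hαs i0) _ (hαs i)]
end

section
/- Let W be a Weyl group of a root system Φ in Euclidean space E and suppose w ∈ W acts as an orthogonal involution fixing a hyperplane H pointwise and negating its orthogonal complement (i.e., w is a reflection). Then w = w_α for some root α ∈ Φ; that is, every reflection contained in a Weyl group is a reflection in a root. -/
open scoped RealInnerProductSpace

section Aux

variable {E : Type*} [NormedAddCommGroup E] [InnerProductSpace ℝ E]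

lemma aux_inner_self_one {b : E} (hb : ‖b‖ = 1) : ⟪b, b⟫ = 1 := by
  rw [real_inner_self_eq_norm_sq, hb]; norm_num

lemma aux_refl_neg_self {b : E} (hb : ‖b‖ = 1) (s : E ≃ₗᵢ[ℝ] E)
    (hs : ∀ x, s x = x - (2 * ⟪x, b⟫) • b) : s b = -b := by
  rw [hs b, aux_inner_self_one hb]
  module

lemma aux_refl_invol {b : E} (hb : ‖b‖ = 1) (s : E ≃ₗᵢ[ℝ] E)
    (hs : ∀ x, s x = x - (2 * ⟪x, b⟫) • b) (x : E) : s (s x) = x := by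
  rw [hs x, hs, inner_sub_left, real_inner_smul_left, aux_inner_self_one hb]
  match_scalars <;> ring

lemma aux_refl_adj {b : E} (hb : ‖b‖ = 1) (s : E ≃ₗᵢ[ℝ] E)
    (hs : ∀ x, s x = x - (2 * ⟪x, b⟫) • b) (α y : E) : ⟪α, s y⟫ = ⟪s α, y⟫ := by
  conv_lhs => rw [← aux_refl_invol hb s hs α]
  exact s.inner_map_map (s α) y

lemma aux_refl_eq_reflection [FiniteDimensional ℝ E] {b : E} (hb : ‖b‖ = 1)
    (s : E ≃ₗᵢ[ℝ] E) (hs : ∀ x, s x = x - (2 * ⟪x, b⟫) • b) :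
    s = Submodule.reflection ((ℝ ∙ b)ᗮ) := by
  ext y
  have hmem : y - ⟪y, b⟫ • b ∈ (ℝ ∙ b)ᗮ := by
    rw [Submodule.mem_orthogonal_singleton_iff_inner_right]
    rw [inner_sub_right, real_inner_smul_right, aux_inner_self_one hb]
    rw [real_inner_comm]; ring
  have hy : y = (y - ⟪y, b⟫ • b) + ⟪y, b⟫ • b := by abel
  calc s y = s ((y - ⟪y, b⟫ • b) + ⟪y, b⟫ • b) := by rw [← hy]
    _ = s (y - ⟪y, b⟫ • b) + ⟪y, b⟫ • s b := by
        rw [map_add, map_smul]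
    _ = (y - ⟪y, b⟫ • b) + ⟪y, b⟫ • (-b) := by
        rw [aux_refl_neg_self hb s hs]
        congr 1
        rw [hs, inner_sub_left, real_inner_smul_left, aux_inner_self_one hb]
        match_scalars <;> ring
    _ = Submodule.reflection ((ℝ ∙ b)ᗮ) ((y - ⟪y, b⟫ • b) + ⟪y, b⟫ • b) := by
        rw [map_add, map_smul, Submodule.reflection_mem_subspace_eq_self hmem,
          Submodule.reflection_orthogonalComplement_singleton_eq_neg]
    _ = Submodule.reflection ((ℝ ∙ b)ᗮ) y := by rw [← hy]

lemma aux_refl_det [FiniteDimensional ℝ E] {b : E} (hb : ‖b‖ = 1)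
    (s : E ≃ₗᵢ[ℝ] E) (hs : ∀ x, s x = x - (2 * ⟪x, b⟫) • b) :
    LinearMap.det s.toLinearMap = -1 := by
  have hb0 : b ≠ 0 := by
    intro h; rw [h, norm_zero] at hb; norm_num at hb
  have h1 : ((ℝ ∙ b)ᗮ)ᗮ = ℝ ∙ b := Submodule.orthogonal_orthogonal _
  rw [aux_refl_eq_reflection hb s hs, Submodule.det_reflection, h1, finrank_span_singleton hb0,
    pow_one]

lemma aux_det_mul [FiniteDimensional ℝ E] (u v : E ≃ₗᵢ[ℝ] E) :
    LinearMap.det (u * v).toLinearMap =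
      LinearMap.det u.toLinearMap * LinearMap.det v.toLinearMap := by
  have h : (u * v).toLinearMap = u.toLinearMap ∘ₗ v.toLinearMap := by
    ext x; rfl
  rw [h, LinearMap.det_comp]

lemma aux_det_one [FiniteDimensional ℝ E] :
    LinearMap.det (1 : E ≃ₗᵢ[ℝ] E).toLinearMap = 1 := by
  have : (1 : E ≃ₗᵢ[ℝ] E).toLinearMap = LinearMap.id := by ext x; rfl
  rw [this, LinearMap.det_id]

end Aux

section Aux2

variable {E : Type*} [NormedAddCommGroup E] [InnerProductSpace ℝ E]

lemma aux_scale {α : E} (hα : α ≠ 0) (x : E) :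
    x - (2 * ⟪x, ‖α‖⁻¹ • α⟫) • (‖α‖⁻¹ • α) = x - (2 * ⟪x, α⟫ / ⟪α, α⟫) • α := by
  have hn : ‖α‖ ≠ 0 := norm_ne_zero_iff.mpr hα
  rw [real_inner_smul_right, smul_smul, real_inner_self_eq_norm_sq]
  have hsc : 2 * (‖α‖⁻¹ * ⟪x, α⟫) * ‖α‖⁻¹ = 2 * ⟪x, α⟫ / ‖α‖ ^ 2 := by
    rw [div_eq_mul_inv, sq, mul_inv]
    ring
  rw [hsc]

lemma aux_unit_norm {α : E} (hα : α ≠ 0) : ‖(‖α‖⁻¹ • α)‖ = 1 := by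
  have hn : ‖α‖ ≠ 0 := norm_ne_zero_iff.mpr hα
  rw [norm_smul, norm_inv, norm_norm, inv_mul_cancel₀ hn]

end Aux2
theorem stmt17 {E : Type*} [NormedAddCommGroup E] [InnerProductSpace ℝ E]
    [FiniteDimensional ℝ E]
    (Φ : Set E) (hfin : Φ.Finite) (h0 : (0 : E) ∉ Φ)
    (hneg : ∀ α ∈ Φ, -α ∈ Φ)
    (hcl : ∀ α ∈ Φ, ∀ β ∈ Φ, β - (2 * ⟪β, α⟫ / ⟪α, α⟫) • α ∈ Φ)
    (w : E ≃ₗᵢ[ℝ] E)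
    (hw : w ∈ Subgroup.closure {s : E ≃ₗᵢ[ℝ] E |
      ∃ α ∈ Φ, ∀ x, s x = x - (2 * ⟪x, α⟫ / ⟪α, α⟫) • α})
    (v : E) (hv : v ≠ 0) (hwv : w v = -v)
    (hfix : ∀ x, ⟪x, v⟫ = 0 → w x = x) :
    ∃ α ∈ Φ, ∀ x, w x = x - (2 * ⟪x, α⟫ / ⟪α, α⟫) • α := by
  classical
  have hvv : ⟪v, v⟫ ≠ 0 := by
    rw [real_inner_self_eq_norm_sq]
    exact pow_ne_zero 2 (norm_ne_zero_iff.mpr hv)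
  have hwform : ∀ y, w y = y - (2 * ⟪y, v⟫ / ⟪v, v⟫) • v := by
    intro y
    have hq : ⟪y - (⟪y, v⟫ / ⟪v, v⟫) • v, v⟫ = 0 := by
      rw [inner_sub_left, real_inner_smul_left]
      field_simp
      ring
    have h1 : w (y - (⟪y, v⟫ / ⟪v, v⟫) • v) = y - (⟪y, v⟫ / ⟪v, v⟫) • v := hfix _ hq
    have h2 : w y = w (y - (⟪y, v⟫ / ⟪v, v⟫) • v) + (⟪y, v⟫ / ⟪v, v⟫) • w v := by
      rw [← map_smul, ← map_add]
      congr 1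
      abel
    rw [h2, h1, hwv]
    match_scalars <;> ring
  by_cases hpar : ∃ α ∈ Φ, ∃ c : ℝ, α = c • v
  · obtain ⟨α, hαΦ, c, hc⟩ := hpar
    have hα0 : α ≠ 0 := fun h => h0 (h ▸ hαΦ)
    have hc0 : c ≠ 0 := by
      rintro rfl
      rw [zero_smul] at hc
      exact hα0 hc
    refine ⟨α, hαΦ, fun x => ?_⟩
    rw [hwform x, hc]
    congr 1
    rw [real_inner_smul_right, real_inner_smul_right, real_inner_smul_left, smul_smul]
    congr 1
    field_simp
  · exfalso
    have hne0 : ∀ β ∈ Φ, β ≠ 0 := fun β hβ h => h0 (h ▸ hβ)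
    set G : Set (E ≃ₗᵢ[ℝ] E) := {s : E ≃ₗᵢ[ℝ] E |
      ∃ α ∈ Φ, ∀ x, s x = x - (2 * ⟪x, α⟫ / ⟪α, α⟫) • α} with hGdef
    set Φ' : Set E := (fun x : E => ‖x‖⁻¹ • x) '' Φ with hΦ'def
    have hfin' : Φ'.Finite := hfin.image _
    have hsmem : ∀ β ∈ Φ, ‖β‖⁻¹ • β ∈ Φ' := fun β hβ => ⟨β, hβ, rfl⟩
    have hunit : ∀ α ∈ Φ', ‖α‖ = 1 := by
      rintro _ ⟨β, hβ, rfl⟩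
      exact aux_unit_norm (hne0 β hβ)
    have h0' : (0 : E) ∉ Φ' := fun h => by simpa using hunit 0 h
    have hneg' : ∀ α ∈ Φ', -α ∈ Φ' := by
      rintro _ ⟨β, hβ, rfl⟩
      refine ⟨-β, hneg β hβ, ?_⟩
      dsimp only
      rw [norm_neg, smul_neg]
    have hnopar : ∀ α ∈ Φ', ∀ c : ℝ, α ≠ c • v := by
      rintro _ ⟨β, hβ, rfl⟩ c h
      dsimp only at h
      refine hpar ⟨β, hβ, ‖β‖ * c, ?_⟩
      have hβ' : β = ‖β‖ • (‖β‖⁻¹ • β) := by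
        rw [smul_smul, mul_inv_cancel₀ (norm_ne_zero_iff.mpr (hne0 β hβ)), one_smul]
      calc β = ‖β‖ • (‖β‖⁻¹ • β) := hβ'
        _ = ‖β‖ • (c • v) := by rw [h]
        _ = (‖β‖ * c) • v := by rw [smul_smul]
    have hgen : ∀ s ∈ G, ∃ b, b ∈ Φ' ∧ ‖b‖ = 1 ∧ ∀ x, s x = x - (2 * ⟪x, b⟫) • b := by
      rintro s ⟨α, hαΦ, hform⟩
      refine ⟨‖α‖⁻¹ • α, hsmem α hαΦ, aux_unit_norm (hne0 α hαΦ), fun x => ?_⟩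
      rw [hform x, ← aux_scale (hne0 α hαΦ) x]
    have hgenpres : ∀ s ∈ G, ∀ a ∈ Φ', s a ∈ Φ' := by
      rintro s ⟨α, hαΦ, hform⟩ _ ⟨β, hβ, rfl⟩
      have h1 : s β ∈ Φ := by rw [hform]; exact hcl α hαΦ β hβ
      have h2 : s (‖β‖⁻¹ • β) = ‖s β‖⁻¹ • s β := by
        rw [map_smul, s.norm_map]
      rw [h2]
      exact hsmem _ h1
    have hWpres : ∀ u ∈ Subgroup.closure G, (∀ a ∈ Φ', u a ∈ Φ') ∧ ∀ a ∈ Φ', u⁻¹ a ∈ Φ' := by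
      intro u hu
      induction hu using Subgroup.closure_induction with
      | mem s hs =>
        obtain ⟨b, hbΦ, hb1, hsf⟩ := hgen s hs
        have hsymm : ∀ a, s⁻¹ a = s a := by
          intro a
          apply s.injective
          have h1 : s (s⁻¹ a) = a := by
            have h2 : s (s⁻¹ a) = (s * s⁻¹) a := rfl
            rw [h2, mul_inv_cancel]
            rfl
          rw [h1, aux_refl_invol hb1 s hsf]
        exact ⟨hgenpres s hs, fun a ha => hsymm a ▸ hgenpres s hs a ha⟩
      | one =>
        constructor <;> intro a ha <;> simpa using ha
      | mul x y hx hy ihx ihy =>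
        constructor
        · intro a ha
          have h1 : (x * y) a = x (y a) := rfl
          rw [h1]
          exact ihx.1 _ (ihy.1 a ha)
        · intro a ha
          have h1 : (x * y)⁻¹ a = y⁻¹ (x⁻¹ a) := by rw [mul_inv_rev]; rfl
          rw [h1]
          exact ihy.2 _ (ihx.2 a ha)
      | inv x hx ihx =>
        refine ⟨ihx.2, fun a ha => ?_⟩
        rw [inv_inv]
        exact ihx.1 a ha
    -- generic z
    have hzex : ∃ z : E, ∀ α ∈ Φ', ⟪α, z⟫ ≠ 0 := by
      by_contra hcon
      push_neg at hcon
      have hcount : Countable ↥Φ' := hfin'.countable.to_subtype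
      have hclosed : ∀ α : ↥Φ', IsClosed {y : E | ⟪(α : E), y⟫ = 0} := fun α =>
        isClosed_eq (Continuous.inner continuous_const continuous_id) continuous_const
      have hcover : (⋃ α : ↥Φ', {y : E | ⟪(α : E), y⟫ = 0}) = Set.univ := by
        ext y
        simp only [Set.mem_iUnion, Set.mem_univ, iff_true]
        obtain ⟨α, hα, h⟩ := hcon y
        exact ⟨⟨α, hα⟩, h⟩
      obtain ⟨α, hα⟩ := nonempty_interior_of_iUnion_of_closed hclosed hcover
      have hKset : {y : E | ⟪(α : E), y⟫ = 0} =
          (LinearMap.ker (innerSL ℝ (α : E) : E →ₗ[ℝ] ℝ) : Set E) := by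
        ext y
        simp [LinearMap.mem_ker]
      rw [hKset] at hα
      have hKtop : LinearMap.ker (innerSL ℝ (α : E) : E →ₗ[ℝ] ℝ) = ⊤ :=
        Submodule.eq_top_of_nonempty_interior' _ hα
      have hαα : ⟪(α : E), (α : E)⟫ = 0 := by
        have h1 : (α : E) ∈ LinearMap.ker (innerSL ℝ (α : E) : E →ₗ[ℝ] ℝ) := by
          rw [hKtop]; exact Submodule.mem_top
        simpa using h1
      have hα0 : (α : E) = 0 := by rwa [inner_self_eq_zero] at hαα
      exact h0' (hα0 ▸ α.2)
    obtain ⟨z, hz⟩ := hzex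
    set P : Finset E := hfin'.toFinset.filter (fun α => 0 < ⟪α, z⟫) with hPdef
    have hPmem : ∀ α, α ∈ P ↔ α ∈ Φ' ∧ 0 < ⟪α, z⟫ := by
      intro α
      rw [hPdef, Finset.mem_filter, Set.Finite.mem_toFinset]
    have hfzpos : 0 < ∏ α ∈ P, ⟪α, z⟫ :=
      Finset.prod_pos fun α hα => ((hPmem α).1 hα).2
    -- the sign formula
    have hsign : ∀ u : E ≃ₗᵢ[ℝ] E, (∀ x, u (u x) = x) → (∀ a ∈ Φ', u a ∈ Φ') → ∀ y,
        (∏ α ∈ P, ⟪α, u y⟫) =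
          (∏ α ∈ P, (if ⟪u α, z⟫ < 0 then (-1 : ℝ) else 1)) * ∏ α ∈ P, ⟪α, y⟫ := by
      intro u huinv hupres y
      have hadj : ∀ α, ⟪α, u y⟫ = ⟪u α, y⟫ := by
        intro α
        conv_lhs => rw [← huinv α]
        exact u.inner_map_map (u α) y
      have hmemτ : ∀ a ∈ P, (if ⟪u a, z⟫ < 0 then -u a else u a) ∈ P := by
        intro a ha
        have haΦ : a ∈ Φ' := ((hPmem a).1 ha).1
        have huaΦ : u a ∈ Φ' := hupres a haΦ
        by_cases hc : ⟪u a, z⟫ < 0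
        · rw [if_pos hc]
          exact (hPmem _).2 ⟨hneg' _ huaΦ, by rw [inner_neg_left]; linarith⟩
        · rw [if_neg hc]
          exact (hPmem _).2 ⟨huaΦ, lt_of_le_of_ne (not_lt.mp hc) (Ne.symm (hz _ huaΦ))⟩
      have hττ : ∀ a ∈ P, (if ⟪u (if ⟪u a, z⟫ < 0 then -u a else u a), z⟫ < 0 then
          -u (if ⟪u a, z⟫ < 0 then -u a else u a)
          else u (if ⟪u a, z⟫ < 0 then -u a else u a)) = a := by
        intro a ha
        have hap : 0 < ⟪a, z⟫ := ((hPmem a).1 ha).2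
        by_cases hc : ⟪u a, z⟫ < 0
        · rw [if_pos hc]
          have h1 : u (-u a) = -a := by rw [map_neg, huinv]
          rw [h1, inner_neg_left, if_pos (by linarith), neg_neg]
        · rw [if_neg hc, huinv, if_neg (not_lt.mpr (le_of_lt hap))]
      have hstep1 : (∏ α ∈ P, ⟪α, u y⟫) = ∏ α ∈ P,
          ((if ⟪u α, z⟫ < 0 then (-1 : ℝ) else 1) *
            ⟪(if ⟪u α, z⟫ < 0 then -u α else u α), y⟫) := by
        refine Finset.prod_congr rfl fun α _ => ?_
        rw [hadj α]
        by_cases hc : ⟪u α, z⟫ < 0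
        · rw [if_pos hc, if_pos hc, inner_neg_left]
          ring
        · rw [if_neg hc, if_neg hc, one_mul]
      rw [hstep1, Finset.prod_mul_distrib]
      congr 1
      exact Finset.prod_nbij' (fun α => if ⟪u α, z⟫ < 0 then -u α else u α)
        (fun γ => if ⟪u γ, z⟫ < 0 then -u γ else u γ)
        hmemτ hmemτ hττ hττ (fun a _ => rfl)
    -- w data
    have hwb : ∀ x, w x = x - (2 * ⟪x, ‖v‖⁻¹ • v⟫) • (‖v‖⁻¹ • v) := by
      intro x
      rw [aux_scale hv x]
      exact hwform x
    have hbv1 : ‖(‖v‖⁻¹ • v)‖ = 1 := aux_unit_norm hv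
    have hwinv : ∀ x, w (w x) = x := aux_refl_invol hbv1 w hwb
    have hwpres : ∀ a ∈ Φ', w a ∈ Φ' := (hWpres w hw).1
    have hprodw : (∏ α ∈ P, (if ⟪w α, z⟫ < 0 then (-1 : ℝ) else 1)) = 1 := by
      refine Finset.prod_involution (fun a _ => if ⟪w a, z⟫ < 0 then -w a else a)
        ?_ ?_ ?_ ?_
      · intro a ha
        by_cases hc : ⟪w a, z⟫ < 0
        · have hap : 0 < ⟪a, z⟫ := ((hPmem a).1 ha).2
          simp only [if_pos hc]
          have h1 : w (-w a) = -a := by rw [map_neg, hwinv]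
          rw [h1, inner_neg_left, if_pos (by linarith)]
          norm_num
        · simp only [if_neg hc]
          norm_num
      · intro a ha hfa
        have hc : ⟪w a, z⟫ < 0 := by
          by_contra hcc
          rw [if_neg hcc] at hfa
          exact hfa rfl
        rw [if_pos hc]
        intro heq
        have hwa : w a = -a := neg_eq_iff_eq_neg.mp heq
        have haΦ : a ∈ Φ' := ((hPmem a).1 ha).1
        have h2 : a - (2 * ⟪a, v⟫ / ⟪v, v⟫) • v = -a := by rw [← hwform a, hwa]
        have h6 : a + (a - (2 * ⟪a, v⟫ / ⟪v, v⟫) • v) = 0 := by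
          rw [h2]; exact add_neg_cancel a
        have h8 : a + a - (2 * ⟪a, v⟫ / ⟪v, v⟫) • v = 0 := by rw [← h6]; abel
        have h7 : (2 : ℝ) • a = (2 * ⟪a, v⟫ / ⟪v, v⟫) • v := by
          rw [two_smul]
          exact sub_eq_zero.mp h8
        have h10 : a = (2⁻¹ * (2 * ⟪a, v⟫ / ⟪v, v⟫)) • v := by
          rw [mul_smul, ← h7, smul_smul]
          norm_num
        exact hnopar a haΦ _ h10
      · intro a ha
        by_cases hc : ⟪w a, z⟫ < 0
        · rw [if_pos hc]
          have hap : 0 < ⟪a, z⟫ := ((hPmem a).1 ha).2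
          exact (hPmem _).2 ⟨hneg' _ (hwpres a ((hPmem a).1 ha).1),
            by rw [inner_neg_left]; linarith⟩
        · rw [if_neg hc]
          exact ha
      · intro a ha
        by_cases hc : ⟪w a, z⟫ < 0
        · simp only [if_pos hc]
          have h1 : w (-w a) = -a := by rw [map_neg, hwinv]
          have hap : 0 < ⟪a, z⟫ := ((hPmem a).1 ha).2
          rw [h1, inner_neg_left, if_pos (by linarith), neg_neg]
        · simp only [if_neg hc]
    have hprods : ∀ (s : E ≃ₗᵢ[ℝ] E) (b : E), b ∈ Φ' → ‖b‖ = 1 →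
        (∀ a ∈ Φ', s a ∈ Φ') → (∀ x, s x = x - (2 * ⟪x, b⟫) • b) →
        (∏ α ∈ P, (if ⟪s α, z⟫ < 0 then (-1 : ℝ) else 1)) = -1 := by
      intro s b hbΦ hb1 hspres hsf
      have hsinv := aux_refl_invol hb1 s hsf
      have hsb : s b = -b := aux_refl_neg_self hb1 s hsf
      have hsnb : s (-b) = b := by rw [map_neg, hsb, neg_neg]
      have hbz : ⟪b, z⟫ ≠ 0 := hz b hbΦ
      set β₀ : E := if 0 < ⟪b, z⟫ then b else -b with hβ₀def
      have hβ₀Φ : β₀ ∈ Φ' := by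
        rw [hβ₀def]
        split_ifs
        · exact hbΦ
        · exact hneg' b hbΦ
      have hβ₀P : β₀ ∈ P := by
        rw [hPmem]
        refine ⟨hβ₀Φ, ?_⟩
        rw [hβ₀def]
        split_ifs with h
        · exact h
        · rw [inner_neg_left]
          rcases lt_or_gt_of_ne hbz with h1 | h1
          · linarith
          · exact absurd h1 h
      have hsβ₀ : s β₀ = -β₀ := by
        rw [hβ₀def]
        split_ifs
        · exact hsb
        · rw [hsnb, neg_neg]
      have hsnβ₀ : s (-β₀) = β₀ := by rw [map_neg, hsβ₀, neg_neg]
      have hβ₀z : 0 < ⟪β₀, z⟫ := ((hPmem β₀).1 hβ₀P).2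
      have hc0 : ⟪s β₀, z⟫ < 0 := by rw [hsβ₀, inner_neg_left]; linarith
      rw [← Finset.mul_prod_erase P _ hβ₀P, if_pos hc0]
      have herase : (∏ α ∈ P.erase β₀, (if ⟪s α, z⟫ < 0 then (-1 : ℝ) else 1)) = 1 := by
        refine Finset.prod_involution (fun a _ => if ⟪s a, z⟫ < 0 then -s a else a)
          ?_ ?_ ?_ ?_
        · intro a ha
          have hap : 0 < ⟪a, z⟫ := ((hPmem a).1 (Finset.mem_of_mem_erase ha)).2
          by_cases hc : ⟪s a, z⟫ < 0
          · simp only [if_pos hc]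
            have h1 : s (-s a) = -a := by rw [map_neg, hsinv]
            rw [h1, inner_neg_left, if_pos (by linarith)]
            norm_num
          · simp only [if_neg hc]
            norm_num
        · intro a ha hfa
          have haP : a ∈ P := Finset.mem_of_mem_erase ha
          have haβ₀ : a ≠ β₀ := Finset.ne_of_mem_erase ha
          have hap : 0 < ⟪a, z⟫ := ((hPmem a).1 haP).2
          have haΦ : a ∈ Φ' := ((hPmem a).1 haP).1
          have hc : ⟪s a, z⟫ < 0 := by
            by_contra hcc
            rw [if_neg hcc] at hfa
            exact hfa rfl
          rw [if_pos hc]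
          intro heq
          have hsa : s a = -a := neg_eq_iff_eq_neg.mp heq
          have h2 : a - (2 * ⟪a, b⟫) • b = -a := by rw [← hsf a, hsa]
          have h6 : a + (a - (2 * ⟪a, b⟫) • b) = 0 := by
            rw [h2]; exact add_neg_cancel a
          have h8 : a + a - (2 * ⟪a, b⟫) • b = 0 := by rw [← h6]; abel
          have h7 : (2 : ℝ) • a = (2 * ⟪a, b⟫) • b := by
            rw [two_smul]
            exact sub_eq_zero.mp h8
          have h10 : a = (2⁻¹ * (2 * ⟪a, b⟫)) • b := by
            rw [mul_smul, ← h7, smul_smul]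
            norm_num
          have hta : |2⁻¹ * (2 * ⟪a, b⟫)| = 1 := by
            have h11 : ‖a‖ = 1 := hunit a haΦ
            have h12 : ‖(2⁻¹ * (2 * ⟪a, b⟫)) • b‖ = |2⁻¹ * (2 * ⟪a, b⟫)| := by
              rw [norm_smul, hb1, mul_one, Real.norm_eq_abs]
            rw [← h10, h11] at h12
            exact h12.symm
          have hab : a = b ∨ a = -b := by
            rcases abs_eq (by norm_num : (0:ℝ) ≤ 1) |>.mp hta with h13 | h13
            · left; rw [h10, h13, one_smul]
            · right; rw [h10, h13, neg_one_smul]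
          apply haβ₀
          rcases hab with rfl | rfl
          · rw [hβ₀def, if_pos hap]
          · rw [hβ₀def, if_neg]
            rw [inner_neg_left] at hap
            intro h14
            linarith
        · intro a ha
          have haP : a ∈ P := Finset.mem_of_mem_erase ha
          have haβ₀ : a ≠ β₀ := Finset.ne_of_mem_erase ha
          have hap : 0 < ⟪a, z⟫ := ((hPmem a).1 haP).2
          have haΦ : a ∈ Φ' := ((hPmem a).1 haP).1
          by_cases hc : ⟪s a, z⟫ < 0
          · rw [if_pos hc]
            refine Finset.mem_erase.mpr ⟨?_, ?_⟩
            · intro h15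
              have h16 : s a = -β₀ := by rw [← neg_neg (s a), h15]
              have h17 : a = β₀ := by rw [← hsinv a, h16, hsnβ₀]
              exact haβ₀ h17
            · exact (hPmem _).2 ⟨hneg' _ (hspres a haΦ), by rw [inner_neg_left]; linarith⟩
          · rw [if_neg hc]
            exact ha
        · intro a ha
          have haP : a ∈ P := Finset.mem_of_mem_erase ha
          have hap : 0 < ⟪a, z⟫ := ((hPmem a).1 haP).2
          by_cases hc : ⟪s a, z⟫ < 0
          · simp only [if_pos hc]
            have h1 : s (-s a) = -a := by rw [map_neg, hsinv]
            rw [h1, inner_neg_left, if_pos (by linarith), neg_neg]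
          · simp only [if_neg hc]
      rw [herase]
      norm_num
    -- main induction
    have hmain : ∀ u ∈ Subgroup.closure G, ∀ y : E,
        (∏ α ∈ P, ⟪α, u y⟫) = LinearMap.det u.toLinearMap * ∏ α ∈ P, ⟪α, y⟫ := by
      intro u hu
      induction hu using Subgroup.closure_induction with
      | mem s hs =>
        intro y
        obtain ⟨b, hbΦ, hb1, hsf⟩ := hgen s hs
        rw [hsign s (aux_refl_invol hb1 s hsf) (hgenpres s hs) y,
          hprods s b hbΦ hb1 (hgenpres s hs) hsf, aux_refl_det hb1 s hsf]
      | one =>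
        intro y
        have h1 : (1 : E ≃ₗᵢ[ℝ] E) y = y := rfl
        rw [h1, aux_det_one, one_mul]
      | mul x y hx hy ihx ihy =>
        intro t
        have h1 : (x * y) t = x (y t) := rfl
        rw [h1, ihx, ihy, aux_det_mul]
        ring
      | inv x hx ihx =>
        intro t
        have h1 : x (x⁻¹ t) = t := by
          have h2 : x (x⁻¹ t) = (x * x⁻¹) t := rfl
          rw [h2, mul_inv_cancel]
          rfl
        have h2 := ihx (x⁻¹ t)
        rw [h1] at h2
        have hdet1 : LinearMap.det x.toLinearMap * LinearMap.det x⁻¹.toLinearMap = 1 := by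
          rw [← aux_det_mul, mul_inv_cancel, aux_det_one]
        have hdx0 : LinearMap.det x.toLinearMap ≠ 0 := left_ne_zero_of_mul_eq_one hdet1
        have h3 : LinearMap.det x⁻¹.toLinearMap = (LinearMap.det x.toLinearMap)⁻¹ :=
          eq_inv_of_mul_eq_one_right hdet1
        rw [h3, h2, inv_mul_cancel_left₀ hdx0]
    -- conclusion
    have h1 := hmain w hw z
    have h2 : (∏ α ∈ P, ⟪α, w z⟫) = 1 * ∏ α ∈ P, ⟪α, z⟫ := by
      rw [hsign w hwinv hwpres z, hprodw]
    rw [aux_refl_det hbv1 w hwb] at h1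
    have h3 : (1 : ℝ) * ∏ α ∈ P, ⟪α, z⟫ = -1 * ∏ α ∈ P, ⟪α, z⟫ := by
      rw [← h2, h1]
    nlinarith [hfzpos]
end
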